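/- For any simple graph G on n vertices with Laplacian matrix L, the matrix (I + L)^{−1} is doubly stochastic: all its entries are nonnegative and every row and column sums to 1. -/

import Mathlib

open Matrix Finset

attribute [local instance] Matrix.linftyOpNormedRing Matrix.linftyOpNormedAlgebra

lemma entry_abs_le_linfty_norm {n : ℕ} (X : Matrix (Fin n) (Fin n) ℝ) (i j : Fin n) :
    |X i j| ≤ ‖X‖ := by
  have h : ‖X i j‖₊ ≤ ‖X‖₊ := by
    rw [Matrix.linfty_opNNNorm_def]
    exact le_trans (Finset.single_le_sum (f := fun k => ‖X i k‖₊)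
      (fun k _ => zero_le) (Finset.mem_univ j))
      (Finset.le_sup (f := fun i => ∑ j, ‖X i j‖₊) (Finset.mem_univ i))
  calc |X i j| = ‖X i j‖ := (Real.norm_eq_abs _).symm
    _ ≤ ‖X‖ := h

set_option maxHeartbeats 1000000 in
theorem inv_one_add_lapMatrix_doublyStochastic {n : ℕ} (hn : 1 ≤ n)
    (G : SimpleGraph (Fin n)) [DecidableRel G.Adj] :
    (∀ i j, 0 ≤ (1 + G.lapMatrix ℝ)⁻¹ i j) ∧
    (∀ i, ∑ j, (1 + G.lapMatrix ℝ)⁻¹ i j = 1) ∧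
    (∀ j, ∑ i, (1 + G.lapMatrix ℝ)⁻¹ i j = 1) := by
  haveI : Nonempty (Fin n) := ⟨⟨0, hn⟩⟩
  set M : Matrix (Fin n) (Fin n) ℝ := 1 + G.lapMatrix ℝ with hM
  set c : ℝ := (n : ℝ) + 1 with hc
  have hc0 : (0 : ℝ) < c := by positivity
  set B : Matrix (Fin n) (Fin n) ℝ := 1 - c⁻¹ • M with hB
  -- row sums of M are 1
  have hMrow : ∀ i, ∑ j, M i j = 1 := by
    intro i
    have h0 : (G.lapMatrix ℝ *ᵥ fun _ => 1) i = 0 := by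
      rw [G.lapMatrix_mulVec_const_eq_zero]; rfl
    have h1 : ∑ j, G.lapMatrix ℝ i j = 0 := by
      simpa [Matrix.mulVec, dotProduct] using h0
    simp [hM, Matrix.add_apply, Matrix.one_apply, Finset.sum_add_distrib, h1]
  -- entries of B are nonnegative
  have hBnn : ∀ i j, 0 ≤ B i j := by
    intro i j
    have hMij : M i j = (if i = j then ((1 : ℝ) + G.degree i) else 0)
        - (if G.Adj i j then 1 else 0) := by
      simp only [hM, SimpleGraph.lapMatrix, SimpleGraph.degMatrix, Matrix.add_apply,
        Matrix.one_apply, Matrix.sub_apply, Matrix.diagonal_apply, SimpleGraph.adjMatrix_apply]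
      by_cases h : i = j
      · subst h; simp [G.loopless.irrefl i]
      · simp [h]
    have hBij : B i j = (if i = j then (1 : ℝ) else 0) - c⁻¹ * M i j := by
      simp [hB, Matrix.sub_apply, Matrix.smul_apply, Matrix.one_apply, smul_eq_mul]
    rw [hBij, hMij]
    by_cases h : i = j
    · subst h
      have hdeg : (G.degree i : ℝ) ≤ (n : ℝ) := by
        have := G.degree_lt_card_verts i
        have : (G.degree i : ℝ) < (Fintype.card (Fin n) : ℝ) := by exact_mod_cast this
        simpa [Fintype.card_fin] using this.le
      have hadj : ¬ G.Adj i i := G.loopless.irrefl i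
      rw [if_pos rfl, if_pos rfl, if_neg hadj, sub_zero]
      have h1 : c⁻¹ * (1 + (G.degree i : ℝ)) ≤ 1 := by
        rw [inv_mul_le_iff₀ hc0, mul_one, hc]
        linarith
      linarith
    · simp only [if_neg h]
      have hM0 : (0 : ℝ) - (if G.Adj i j then (1:ℝ) else 0) ≤ 0 := by
        split_ifs <;> norm_num
      have : 0 ≤ -(c⁻¹ * ((0 : ℝ) - (if G.Adj i j then (1:ℝ) else 0))) := by
        have hci : 0 ≤ c⁻¹ := (inv_pos.mpr hc0).le
        nlinarith
      linarith
  -- row sums of B are 1 - c⁻¹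
  have hBrow : ∀ i, ∑ j, B i j = 1 - c⁻¹ := by
    intro i
    have : ∑ j, B i j = (∑ j, (1 : Matrix (Fin n) (Fin n) ℝ) i j) - c⁻¹ * ∑ j, M i j := by
      simp [hB, Matrix.sub_apply, Matrix.smul_apply, smul_eq_mul, Finset.sum_sub_distrib,
        Finset.mul_sum]
    rw [this, hMrow i]
    simp [Matrix.one_apply]
  -- norm bound
  have hcinv : (0 : ℝ) < c⁻¹ := inv_pos.mpr hc0
  have hc1 : (1 : ℝ) ≤ c := by
    rw [hc]; have : (0:ℝ) ≤ (n:ℝ) := Nat.cast_nonneg n; linarith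
  have hcinv1 : c⁻¹ ≤ 1 := by
    rw [inv_le_one_iff₀]; right; exact hc1
  have hBnorm : ‖B‖ ≤ 1 - c⁻¹ := by
    have hr : (0 : ℝ) ≤ 1 - c⁻¹ := by linarith
    have : ‖B‖₊ ≤ ⟨1 - c⁻¹, hr⟩ := by
      rw [Matrix.linfty_opNNNorm_def]
      refine Finset.sup_le fun i _ => ?_
      apply NNReal.coe_le_coe.mp
      push_cast
      have heq : (∑ j, ‖B i j‖) = ∑ j, B i j := by
        refine Finset.sum_congr rfl fun j _ => ?_
        rw [Real.norm_of_nonneg (hBnn i j)]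
      rw [heq, hBrow i]
      exact le_rfl
    exact_mod_cast this
  have hBlt : ‖B‖ < 1 := lt_of_le_of_lt hBnorm (by linarith)
  -- unit
  set u : (Matrix (Fin n) (Fin n) ℝ)ˣ := Units.oneSub B hBlt with hu
  have huval : (u : Matrix (Fin n) (Fin n) ℝ) = 1 - B := rfl
  set V : Matrix (Fin n) (Fin n) ℝ := (↑(u⁻¹) : Matrix (Fin n) (Fin n) ℝ) with hV
  have huV : (1 - B) * V = 1 := by rw [← huval, hV]; exact u.mul_inv
  have hVu : V * (1 - B) = 1 := by rw [← huval, hV]; exact u.inv_mul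
  -- M = c • (1 - B)
  have hM1B : M = c • (1 - B) := by
    rw [hB]
    simp [smul_sub, smul_smul, mul_inv_cancel₀ hc0.ne']
  -- M⁻¹ = c⁻¹ • V
  have hMinv : M⁻¹ = c⁻¹ • V := by
    apply Matrix.inv_eq_right_inv
    rw [hM1B, Matrix.smul_mul, Matrix.mul_smul, smul_smul, mul_inv_cancel₀ hc0.ne', one_smul, huV]
  -- nonnegativity of entries of V
  have hVnn : ∀ i j, 0 ≤ V i j := by
    intro i j
    -- V = (∑ k in range N, B ^ k) + V * B ^ N
    have key : ∀ N : ℕ, V = (∑ k ∈ Finset.range N, B ^ k) + V * B ^ N := by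
      intro N
      have hgs : (1 - B) * (∑ k ∈ Finset.range N, B ^ k) = 1 - B ^ N := by
        have := mul_geom_sum B N -- (B - 1) * ∑ = B ^ N - 1 ?
        have h := Commute.mul_geom_sum₂ (Commute.one_right B) N
        -- fallback: use mul_neg_geom_sum
        calc (1 - B) * ∑ k ∈ Finset.range N, B ^ k
            = -((B - 1) * ∑ k ∈ Finset.range N, B ^ k) := by
              rw [← neg_sub B 1, neg_mul]
          _ = -(B ^ N - 1) := by rw [mul_geom_sum]
          _ = 1 - B ^ N := by rw [neg_sub]
      calc V = V * 1 := (mul_one V).symm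
        _ = V * ((1 - B) * (∑ k ∈ Finset.range N, B ^ k) + B ^ N) := by
            rw [hgs, sub_add_cancel]
        _ = (V * (1 - B)) * (∑ k ∈ Finset.range N, B ^ k) + V * B ^ N := by
            rw [mul_add, mul_assoc]
        _ = (∑ k ∈ Finset.range N, B ^ k) + V * B ^ N := by rw [hVu, one_mul]
    have hSnn : ∀ N : ℕ, 0 ≤ (∑ k ∈ Finset.range N, B ^ k) i j := by
      intro N
      have : ∀ k : ℕ, 0 ≤ (B ^ k) i j := by
        intro k
        induction k generalizing i j with
        | zero =>
          rw [pow_zero, Matrix.one_apply]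
          split_ifs <;> norm_num
        | succ m ih =>
          rw [pow_succ, Matrix.mul_apply]
          exact Finset.sum_nonneg fun l _ => mul_nonneg (ih i l) (hBnn l j)
      have hsum : (∑ k ∈ Finset.range N, B ^ k) i j = ∑ k ∈ Finset.range N, (B ^ k) i j := by
        simp [Matrix.sum_apply]
      rw [hsum]
      exact Finset.sum_nonneg fun k _ => this k
    -- V i j ≥ -‖V‖ * ‖B‖ ^ N for all N
    have hbound : ∀ N : ℕ, -(‖V‖ * ‖B‖ ^ N) ≤ V i j := by
      intro N
      have h1 : V i j = (∑ k ∈ Finset.range N, B ^ k) i j + (V * B ^ N) i j := by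
        conv_lhs => rw [key N]
        simp [Matrix.add_apply]
      have h2 : |(V * B ^ N) i j| ≤ ‖V‖ * ‖B‖ ^ N := by
        calc |(V * B ^ N) i j| ≤ ‖V * B ^ N‖ := entry_abs_le_linfty_norm _ i j
          _ ≤ ‖V‖ * ‖B ^ N‖ := norm_mul_le _ _
          _ ≤ ‖V‖ * ‖B‖ ^ N := by
              rcases Nat.eq_zero_or_pos N with h | h
              · subst h; simp
              · exact mul_le_mul_of_nonneg_left (norm_pow_le' B h) (norm_nonneg V)
      have h3 : -(‖V‖ * ‖B‖ ^ N) ≤ (V * B ^ N) i j := neg_le_of_abs_le h2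
      linarith [hSnn N]
    have htend : Filter.Tendsto (fun N : ℕ => -(‖V‖ * ‖B‖ ^ N)) Filter.atTop (nhds 0) := by
      have h0 : Filter.Tendsto (fun N : ℕ => ‖B‖ ^ N) Filter.atTop (nhds 0) :=
        tendsto_pow_atTop_nhds_zero_of_lt_one (norm_nonneg B) hBlt
      have := (h0.const_mul ‖V‖).neg
      simpa using this
    exact le_of_tendsto' htend hbound
  -- invertibility facts for sums
  have hMV : M * M⁻¹ = 1 := by
    rw [hMinv, hM1B, Matrix.smul_mul, Matrix.mul_smul, smul_smul, mul_inv_cancel₀ hc0.ne',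
      one_smul, huV]
  have hVM : M⁻¹ * M = 1 := by
    rw [hMinv, hM1B, Matrix.smul_mul, Matrix.mul_smul, smul_smul, inv_mul_cancel₀ hc0.ne',
      one_smul, hVu]
  -- row sums of M⁻¹ are 1
  have hrowsum : ∀ i, ∑ j, M⁻¹ i j = 1 := by
    intro i
    have h1 : M *ᵥ (fun _ => (1 : ℝ)) = fun _ => 1 := by
      funext k
      rw [hM]
      rw [Matrix.add_mulVec, G.lapMatrix_mulVec_const_eq_zero]
      simp [Matrix.one_mulVec]
    have h2 : M⁻¹ *ᵥ (fun _ => (1 : ℝ)) = fun _ => 1 := by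
      calc M⁻¹ *ᵥ (fun _ => (1 : ℝ)) = M⁻¹ *ᵥ (M *ᵥ fun _ => (1 : ℝ)) := by rw [h1]
        _ = (M⁻¹ * M) *ᵥ (fun _ => (1 : ℝ)) := by rw [Matrix.mulVec_mulVec]
        _ = fun _ => 1 := by rw [hVM, Matrix.one_mulVec]
    have := congrFun h2 i
    simpa [Matrix.mulVec, dotProduct] using this
  -- symmetry
  have hMsymm : Mᵀ = M := by
    rw [hM, Matrix.transpose_add, Matrix.transpose_one, (G.isSymm_lapMatrix (R := ℝ)).eq]
  have hMinvsymm : (M⁻¹)ᵀ = M⁻¹ := by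
    rw [Matrix.transpose_nonsing_inv, hMsymm]
  refine ⟨fun i j => ?_, fun i => ?_, fun j => ?_⟩
  · rw [hMinv, Matrix.smul_apply, smul_eq_mul]
    exact mul_nonneg hcinv.le (hVnn i j)
  · exact hrowsum i
  · have : ∑ i, M⁻¹ i j = ∑ i, (M⁻¹)ᵀ j i := by
      simp [Matrix.transpose_apply]
    rw [this, hMinvsymm]
    exact hrowsum j
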